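/- Let G be a first-countable topological group (no separation axioms assumed beyond the group topology) and H a closed subgroup of G. Then the quotient space G/H is metrizable. -/

import Mathlib

open Filter Set Topology Uniformity

/-- if `G` is a first-countable topological group (no further separation
axioms) and `H` is a closed subgroup, then the coset space `G/H` is metrizable. -/
theorem stmt_9 {G : Type*} [Group G] [TopologicalSpace G] [IsTopologicalGroup G]
    [FirstCountableTopology G]
    (H : Subgroup G) (hH : IsClosed (H : Set G)) :
    TopologicalSpace.MetrizableSpace (G ⧸ H) := by
  -- the candidate uniformity on `G ⧸ H`
  set rel : Set G → Set ((G ⧸ H) × (G ⧸ H)) :=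
    fun V => {p | ∃ v ∈ V, v • p.1 = p.2} with hrel
  have relmono : Monotone rel := by
    intro V W hVW p ⟨v, hv, hvp⟩
    exact ⟨v, hVW hv, hvp⟩
  set U : Filter ((G ⧸ H) × (G ⧸ H)) := (𝓝 (1 : G)).lift' rel with hU
  have hb : U.HasBasis (fun V => V ∈ 𝓝 (1 : G)) rel :=
    (Filter.basis_sets _).lift' relmono
  have hsymm : Filter.Tendsto Prod.swap U U := by
    rw [hb.tendsto_iff hb]
    intro V hV
    refine ⟨V⁻¹, by simpa using inv_mem_nhds_one G hV, ?_⟩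
    rintro ⟨a, b⟩ ⟨v, hv, hvp⟩
    exact ⟨v⁻¹, Set.mem_inv.mp hv, by have h : v • a = b := hvp; simp only [Prod.fst_swap, Prod.snd_swap]; rw [← h, inv_smul_smul]⟩
  have hcomp : (U.lift' fun s => SetRel.comp s s) ≤ U := by
    apply ((hb.lift' (monotone_id.relComp monotone_id)).le_basis_iff hb).2
    intro V hV
    obtain ⟨W, hW, hWV⟩ := exists_nhds_one_split hV
    refine ⟨W, hW, ?_⟩
    rintro ⟨a, c⟩ ⟨b, ⟨v, hv, hvp⟩, ⟨w, hw, hwp⟩⟩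
    refine ⟨w * v, hWV w hw v hv, ?_⟩
    rw [mul_smul, hvp, hwp]
  have hnhds : ∀ x : G ⧸ H, 𝓝 x = U.comap (Prod.mk x) := by
    intro x
    induction x using QuotientGroup.induction_on with
    | H g =>
      have h1 : (𝓝 ((g : G ⧸ H))).HasBasis (fun V => V ∈ 𝓝 (1 : G))
          (fun V => (fun v : G => ((v * g : G) : G ⧸ H)) '' V) := by
        rw [QuotientGroup.nhds_eq H g, ← map_mul_right_nhds_one g, Filter.map_map]
        exact (Filter.basis_sets _).map _
      have h2 : (U.comap (Prod.mk ((g : G ⧸ H)))).HasBasis (fun V => V ∈ 𝓝 (1 : G))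
          (fun V => Prod.mk ((g : G ⧸ H)) ⁻¹' rel V) := hb.comap _
      refine h1.eq_of_same_basis (h2.congr (fun _ => Iff.rfl) ?_)
      intro V hV
      ext y
      simp only [mem_image, mem_preimage, hrel, mem_setOf_eq,
        MulAction.Quotient.smul_mk, smul_eq_mul]
  letI u : UniformSpace (G ⧸ H) :=
    { toTopologicalSpace := inferInstance
      uniformity := U
      symm := hsymm
      comp := hcomp
      nhds_eq_comap_uniformity := hnhds }
  have hcg : (𝓤 (G ⧸ H)).IsCountablyGenerated := by
    obtain ⟨b, hbasis⟩ := (𝓝 (1 : G)).exists_antitone_basis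
    have : (𝓤 (G ⧸ H)).HasBasis (fun _ : ℕ => True) (rel ∘ b) :=
      hbasis.toHasBasis.lift' relmono
    exact this.isCountablyGenerated
  haveI := hcg
  haveI : T1Space (G ⧸ H) := by
    constructor
    intro x
    induction x using QuotientGroup.induction_on with
    | H g =>
      rw [← (QuotientGroup.isQuotientMap_mk H).isClosed_preimage]
      have : (QuotientGroup.mk : G → G ⧸ H) ⁻¹' {(g : G ⧸ H)}
          = (fun x : G => x⁻¹ * g) ⁻¹' (H : Set G) := by
        ext x
        simp only [mem_preimage, mem_singleton_iff, QuotientGroup.eq, SetLike.mem_coe]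
      rw [this]
      exact hH.preimage (by continuity)
  exact UniformSpace.metrizableSpace
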